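/- Let f : X → ℝ ∪ {∞} be closed convex and β-strongly convex w.r.t. a norm ‖·‖ on a real inner product space X, with f*(0) = 0. Let X_bound > 0 and f_max > 0, let 𝒳 = {x ∈ X : ‖x‖* ≤ X_bound} and 𝒲 = {w ∈ X : f(w) ≤ f_max}, and consider the class of linear functions ℱ = {x ↦ ⟨w,x⟩ : w ∈ 𝒲}. Then for any dataset T = (x_1, …, x_n) with each x_i ∈ 𝒳, the Rademacher complexity satisfies R_T(ℱ) ≤ X_bound · √(2 f_max/(β n)). -/

import Mathlib

open scoped BigOperators
open RealInnerProductSpace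

/-- `N` is a norm on the real vector space `V`. -/
def IsNormOn {V : Type*} [AddCommGroup V] [Module ℝ V] (N : V → ℝ) : Prop :=
  (∀ x, 0 ≤ N x) ∧ (∀ x, N x = 0 → x = 0) ∧
    (∀ (c : ℝ) (x : V), N (c • x) = |c| * N x) ∧ ∀ x y, N (x + y) ≤ N x + N y

variable {X : Type*} [NormedAddCommGroup X] [InnerProductSpace ℝ X]

/-- The dual norm of `N` with respect to the inner product. -/
noncomputable def dualNorm (N : X → ℝ) (y : X) : ℝ :=
  sSup {r : ℝ | ∃ x : X, N x ≤ 1 ∧ r = ⟪x, y⟫}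

/-- The Fenchel conjugate `f⋆(y) = sup_x (⟪x, y⟫ - f x)`. -/
noncomputable def fenchelConj (f : X → EReal) (y : X) : EReal :=
  ⨆ x : X, ((⟪x, y⟫ : ℝ) : EReal) - f x

/-- `f` is convex (with values in `ℝ ∪ {∞}`). -/
def ERealConvexOn (f : X → EReal) : Prop :=
  ∀ (x y : X) (α : ℝ), 0 ≤ α → α ≤ 1 →
    f (α • x + (1 - α) • y) ≤ (α : EReal) * f x + ((1 - α : ℝ) : EReal) * f y

/-- `f` is `β`-strongly convex w.r.t. the norm `N`. -/
def EStrongConvexOn (N : X → ℝ) (β : ℝ) (f : X → EReal) : Prop :=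
  ∀ x ∈ intrinsicInterior ℝ {z : X | f z ≠ ⊤}, ∀ y ∈ intrinsicInterior ℝ {z : X | f z ≠ ⊤},
    ∀ α : ℝ, 0 < α → α < 1 →
      f (α • x + (1 - α) • y) ≤
        (α : EReal) * f x + ((1 - α : ℝ) : EReal) * f y
          - ((β / 2 * α * (1 - α) * N (x - y) ^ 2 : ℝ) : EReal)

private def NormSyn (X : Type*) := X

instance {X : Type*} [AddCommGroup X] : AddCommGroup (NormSyn X) :=
  inferInstanceAs (AddCommGroup X)
instance {X : Type*} [AddCommGroup X] [Module ℝ X] : Module ℝ (NormSyn X) :=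
  inferInstanceAs (Module ℝ X)

theorem norm_comparison {X : Type*} [NormedAddCommGroup X]
    [NormedSpace ℝ X] [FiniteDimensional ℝ X] (N : X → ℝ) (hN : IsNormOn N) :
    ∃ C : ℝ, 0 ≤ C ∧ ∀ z : X, ‖z‖ ≤ C * N z := by
  obtain ⟨h0, hdef, hsmul, htri⟩ := hN
  have N0 : N 0 = 0 := by
    have := hsmul 0 0
    simpa using this
  have Nneg : ∀ z : X, N (-z) = N z := by
    intro z
    have := hsmul (-1) z
    simpa using this
  letI : NormedAddCommGroup (NormSyn X) := AddGroupNorm.toNormedAddCommGroup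
    { toFun := fun z => N z
      map_zero' := N0
      add_le' := htri
      neg' := Nneg
      eq_zero_of_map_eq_zero' := hdef }
  letI : NormedSpace ℝ (NormSyn X) :=
    ⟨fun c z => le_of_eq (by
      show N (c • (z : X)) = ‖c‖ * N (z : X)
      rw [Real.norm_eq_abs]; exact hsmul c z)⟩
  haveI : FiniteDimensional ℝ (NormSyn X) := inferInstanceAs (FiniteDimensional ℝ X)
  let L : NormSyn X →ₗ[ℝ] X :=
    { toFun := fun z => (z : X), map_add' := fun _ _ => rfl, map_smul' := fun _ _ => rfl }
  have hc : Continuous L := L.continuous_of_finiteDimensional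
  obtain ⟨C, hC0, hC⟩ := SemilinearMapClass.bound_of_continuous (σ₁₂ := RingHom.id ℝ) L hc
  exact ⟨C, hC0.le, fun z => hC z⟩


attribute [local instance] AffineSubspace.toNormedAddTorsor

theorem combo_mem_intrinsicInterior {X : Type*} [NormedAddCommGroup X] [NormedSpace ℝ X]
    {s : Set X} (hs : Convex ℝ s) {y x : X} (hy : y ∈ intrinsicInterior ℝ s) (hx : x ∈ s)
    {t : ℝ} (ht0 : 0 < t) (ht1 : t < 1) : (1 - t) • y + t • x ∈ intrinsicInterior ℝ s := by
  obtain ⟨y', hy'int, rfl⟩ := hy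
  haveI : Nonempty (affineSpan ℝ s) := ⟨⟨x, subset_affineSpan ℝ s hx⟩⟩
  let φ := IsometryEquiv.vaddConst (V := (affineSpan ℝ s).direction) y'
  have hmem'' : ∀ d : (affineSpan ℝ s).direction,
      d ∈ φ.toHomeomorph ⁻¹' (((↑) : affineSpan ℝ s → X) ⁻¹' s) ↔ (d : X) + (y' : X) ∈ s := by
    intro d
    show ((d +ᵥ y' : affineSpan ℝ s) : X) ∈ s ↔ _
    rw [AffineSubspace.coe_vadd]
    rfl
  have hconv'' : Convex ℝ (φ.toHomeomorph ⁻¹' (((↑) : affineSpan ℝ s → X) ⁻¹' s)) := by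
    intro d1 h1 d2 h2 a b ha hb hab
    rw [hmem''] at h1 h2 ⊢
    have heq : ((a • d1 + b • d2 : (affineSpan ℝ s).direction) : X) + (y' : X)
        = a • ((d1 : X) + (y' : X)) + b • ((d2 : X) + (y' : X)) := by
      push_cast
      match_scalars <;> linarith
    rw [heq]
    exact hs h1 h2 ha hb hab
  have h0 : (0 : (affineSpan ℝ s).direction)
      ∈ interior (φ.toHomeomorph ⁻¹' (((↑) : affineSpan ℝ s → X) ⁻¹' s)) := by
    rw [← φ.toHomeomorph.preimage_interior]
    show φ 0 ∈ interior (((↑) : affineSpan ℝ s → X) ⁻¹' s)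
    simpa [φ] using hy'int
  have hxmem : x ∈ affineSpan ℝ s := subset_affineSpan ℝ s hx
  let dx : (affineSpan ℝ s).direction := ⟨x - (y' : X), by
    simpa using AffineSubspace.vsub_mem_direction hxmem y'.2⟩
  have hdx : dx ∈ φ.toHomeomorph ⁻¹' (((↑) : affineSpan ℝ s → X) ⁻¹' s) := by
    rw [hmem'']
    show x - (y' : X) + (y' : X) ∈ s
    simpa using hx
  have key : (1 - t) • (0 : (affineSpan ℝ s).direction) + t • dx
      ∈ interior (φ.toHomeomorph ⁻¹' (((↑) : affineSpan ℝ s → X) ⁻¹' s)) :=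
    hconv''.combo_interior_closure_mem_interior h0 (subset_closure hdx)
      (by linarith) ht0.le (by ring)
  rw [smul_zero, zero_add, ← φ.toHomeomorph.preimage_interior] at key
  refine ⟨φ (t • dx), key, ?_⟩
  show ((t • dx +ᵥ y' : affineSpan ℝ s) : X) = _
  rw [AffineSubspace.coe_vadd]
  show t • (x - (y' : X)) + (y' : X) = _
  match_scalars <;> ring


theorem domain_convex {f : X → EReal} (hfbot : ∀ x, f x ≠ ⊥) (hconv : ERealConvexOn f) :
    Convex ℝ {z : X | f z ≠ ⊤} := by
  intro p hp q hq a b ha hb hab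
  have hb' : b = 1 - a := by linarith
  subst hb'
  have hp' : f p = ((f p).toReal : EReal) := (EReal.coe_toReal hp (hfbot p)).symm
  have hq' : f q = ((f q).toReal : EReal) := (EReal.coe_toReal hq (hfbot q)).symm
  have := hconv p q a ha (by linarith)
  rw [hp', hq'] at this
  show f (a • p + (1 - a) • q) ≠ ⊤
  refine ne_top_of_le_ne_top ?_ this
  rw [← EReal.coe_mul, ← EReal.coe_mul, ← EReal.coe_add]
  exact EReal.coe_ne_top _

theorem fy_elem {f : X → EReal} (w y : X) :
    ((⟪w, y⟫ : ℝ) : EReal) - f w ≤ fenchelConj f y :=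
  le_iSup (fun x : X => ((⟪x, y⟫ : ℝ) : EReal) - f x) w

theorem conj_le [FiniteDimensional ℝ X] {f : X → EReal} (hfbot : ∀ x, f x ≠ ⊥)
    (hconv : ERealConvexOn f) {x0 : X} (hx0 : x0 ∈ intrinsicInterior ℝ {z : X | f z ≠ ⊤})
    {y : X} {r : ℝ}
    (hr : ∀ a ∈ intrinsicInterior ℝ {z : X | f z ≠ ⊤}, ⟪a, y⟫ - (f a).toReal ≤ r) :
    fenchelConj f y ≤ (r : EReal) := by
  have Dconv : Convex ℝ {z : X | f z ≠ ⊤} := domain_convex hfbot hconv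
  rw [fenchelConj]
  refine iSup_le fun z => ?_
  by_cases hz : f z = ⊤
  · rw [hz, EReal.sub_top]
    exact bot_le
  · have hfz : f z = ((f z).toReal : EReal) := (EReal.coe_toReal hz (hfbot z)).symm
    rw [hfz, ← EReal.coe_sub, EReal.coe_le_coe_iff]
    have hx0D : f x0 ≠ ⊤ := intrinsicInterior_subset hx0
    set A := ⟪x0, y⟫ - (f x0).toReal with hA
    set B := ⟪z, y⟫ - (f z).toReal with hB
    have kt : ∀ t ∈ Set.Ioo (0:ℝ) 1, (1 - t) * A + t * B ≤ r := by
      rintro t ⟨ht0, ht1⟩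
      have hzt : (1 - t) • x0 + t • z ∈ intrinsicInterior ℝ {z : X | f z ≠ ⊤} :=
        combo_mem_intrinsicInterior Dconv hx0 hz ht0 ht1
      have h1 := hr _ hzt
      have h2 : f ((1 - t) • x0 + t • z)
          ≤ (((1 - t) * (f x0).toReal + t * (f z).toReal : ℝ) : EReal) := by
        have := hconv x0 z (1 - t) (by linarith) (by linarith)
        rw [show (1 : ℝ) - (1 - t) = t by ring] at this
        rw [(EReal.coe_toReal hx0D (hfbot x0)).symm, hfz] at this
        rw [EReal.coe_add, EReal.coe_mul, EReal.coe_mul]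
        exact this
      have h3 : (f ((1 - t) • x0 + t • z)).toReal
          ≤ (1 - t) * (f x0).toReal + t * (f z).toReal :=
        EReal.toReal_le_toReal h2 (hfbot _) (EReal.coe_ne_top _)
      have h4 : ⟪(1 - t) • x0 + t • z, y⟫ = (1 - t) * ⟪x0, y⟫ + t * ⟪z, y⟫ := by
        rw [inner_add_left, real_inner_smul_left, real_inner_smul_left]
      rw [hA, hB]
      calc (1 - t) * (⟪x0, y⟫ - (f x0).toReal) + t * (⟪z, y⟫ - (f z).toReal)
          ≤ ⟪(1 - t) • x0 + t • z, y⟫ - (f ((1 - t) • x0 + t • z)).toReal := by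
            rw [h4]; linarith
        _ ≤ r := h1
    haveI : (nhdsWithin (1:ℝ) (Set.Ioo (0:ℝ) 1)).NeBot := by
      refine mem_closure_iff_nhdsWithin_neBot.mp ?_
      rw [closure_Ioo (by norm_num : (0:ℝ) ≠ 1)]
      exact ⟨by norm_num, le_refl 1⟩
    have hcont : Filter.Tendsto (fun t : ℝ => (1 - t) * A + t * B)
        (nhdsWithin (1:ℝ) (Set.Ioo (0:ℝ) 1)) (nhds B) := by
      have h5 : Continuous (fun t : ℝ => (1 - t) * A + t * B) := by fun_prop
      have h6 := h5.tendsto 1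
      rw [show (1 - (1:ℝ)) * A + 1 * B = B by ring] at h6
      exact h6.mono_left nhdsWithin_le_nhds
    exact le_of_tendsto hcont (eventually_nhdsWithin_of_forall kt)

theorem pairing_elem {N : X → ℝ} (hN : IsNormOn N) {β : ℝ} (hβ : 0 < β)
    {f : X → EReal} (hfbot : ∀ x, f x ≠ ⊥) (hsc : EStrongConvexOn N β f)
    {u v : X} {c : ℝ} (hc : ∀ d : X, ⟪d, v⟫ ≤ N d * c)
    {a b : X} (ha : a ∈ intrinsicInterior ℝ {z : X | f z ≠ ⊤})
    (hb : b ∈ intrinsicInterior ℝ {z : X | f z ≠ ⊤}) :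
    ∃ m : X, f m ≠ ⊤ ∧
      (⟪a, u + v⟫ - (f a).toReal) + (⟪b, u - v⟫ - (f b).toReal)
        ≤ 2 * (⟪m, u⟫ - (f m).toReal) + c ^ 2 / β := by
  have haD : f a ≠ ⊤ := intrinsicInterior_subset ha
  have hbD : f b ≠ ⊤ := intrinsicInterior_subset hb
  set Fa := (f a).toReal with hFa
  set Fb := (f b).toReal with hFb
  set m := (1/2 : ℝ) • a + (1 - 1/2 : ℝ) • b with hm
  have hsc' := hsc a ha b hb (1/2) (by norm_num) (by norm_num)
  rw [(EReal.coe_toReal haD (hfbot a)).symm, (EReal.coe_toReal hbD (hfbot b)).symm] at hsc'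
  rw [← EReal.coe_mul, ← EReal.coe_mul, ← EReal.coe_add, ← EReal.coe_sub] at hsc'
  have hmD : f m ≠ ⊤ := ne_top_of_le_ne_top (EReal.coe_ne_top _) hsc'
  set Fm := (f m).toReal with hFm
  have hFmle : Fm ≤ 1/2 * Fa + (1 - 1/2) * Fb - β / 2 * (1/2) * (1 - 1/2) * N (a - b) ^ 2 :=
    EReal.toReal_le_toReal hsc' (hfbot m) (EReal.coe_ne_top _)
  refine ⟨m, hmD, ?_⟩
  have hinm : ⟪m, u⟫ = 1/2 * ⟪a, u⟫ + (1 - 1/2) * ⟪b, u⟫ := by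
    rw [hm, inner_add_left, real_inner_smul_left, real_inner_smul_left]
  have hiav : ⟪a, u + v⟫ = ⟪a, u⟫ + ⟪a, v⟫ := inner_add_right a u v
  have hibv : ⟪b, u - v⟫ = ⟪b, u⟫ - ⟪b, v⟫ := inner_sub_right b u v
  have hd : ⟪a, v⟫ - ⟪b, v⟫ ≤ N (a - b) * c := by
    have := hc (a - b)
    rwa [inner_sub_left] at this
  have ht0 : 0 ≤ N (a - b) := hN.1 _
  set t := N (a - b)
  have key : t * c ≤ β / 4 * t ^ 2 + c ^ 2 / β := by
    rw [← sub_nonneg]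
    have h1 : β / 4 * t ^ 2 + c ^ 2 / β - t * c = (β * t - 2 * c) ^ 2 / (4 * β) := by
      field_simp
      ring
    rw [h1]
    positivity
  rw [hinm, hiav, hibv]
  linarith

theorem conj_ne_bot {f : X → EReal} (hfbot : ∀ x, f x ≠ ⊥) {x0 : X} (hx0 : f x0 ≠ ⊤)
    (y : X) : fenchelConj f y ≠ ⊥ := by
  have h := fy_elem (f := f) x0 y
  rw [(EReal.coe_toReal hx0 (hfbot x0)).symm, ← EReal.coe_sub] at h
  exact fun hbot => by rw [hbot] at h; exact (not_le.mpr (EReal.bot_lt_coe _)) h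

theorem conj_ne_top [FiniteDimensional ℝ X] {N : X → ℝ} (hN : IsNormOn N) {β : ℝ} (hβ : 0 < β)
    {f : X → EReal} (hfbot : ∀ x, f x ≠ ⊥) (hconv : ERealConvexOn f)
    (hsc : EStrongConvexOn N β f) (hstar0 : fenchelConj f (0 : X) = 0)
    {x0 : X} (hx0 : x0 ∈ intrinsicInterior ℝ {z : X | f z ≠ ⊤})
    {y : X} {c : ℝ} (hc : ∀ d : X, ⟪d, y⟫ ≤ N d * c) :
    fenchelConj f y ≠ ⊤ := by
  have hx0D : f x0 ≠ ⊤ := intrinsicInterior_subset hx0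
  have hb : fenchelConj f y
      ≤ ((c ^ 2 / β - (⟪x0, (0 : X) - y⟫ - (f x0).toReal) : ℝ) : EReal) := by
    refine conj_le hfbot hconv hx0 (fun a ha => ?_)
    obtain ⟨m, hmD, hmle⟩ := pairing_elem hN hβ hfbot hsc (u := 0) hc ha hx0
    have hm0 : (0:ℝ) - (f m).toReal ≤ 0 := by
      have h := fy_elem (f := f) m 0
      rw [hstar0, (EReal.coe_toReal hmD (hfbot m)).symm, ← EReal.coe_sub] at h
      have h2 : ((⟪m, (0:X)⟫ - (f m).toReal : ℝ) : EReal) ≤ ((0 : ℝ) : EReal) := h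
      rw [EReal.coe_le_coe_iff] at h2
      rwa [inner_zero_right] at h2
    have hz : ⟪a, (0 : X) + y⟫ = ⟪a, y⟫ := by rw [zero_add]
    rw [hz] at hmle
    rw [inner_zero_right] at hmle
    linarith
  exact ne_top_of_le_ne_top (EReal.coe_ne_top _) hb

theorem pairing_real [FiniteDimensional ℝ X] {N : X → ℝ} (hN : IsNormOn N) {β : ℝ} (hβ : 0 < β)
    {f : X → EReal} (hfbot : ∀ x, f x ≠ ⊥) (hconv : ERealConvexOn f)
    (hsc : EStrongConvexOn N β f)
    {x0 : X} (hx0 : x0 ∈ intrinsicInterior ℝ {z : X | f z ≠ ⊤})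
    (hfin : ∀ y : X, fenchelConj f y ≠ ⊤)
    {u v : X} {c : ℝ} (hc : ∀ d : X, ⟪d, v⟫ ≤ N d * c) :
    (fenchelConj f (u + v)).toReal + (fenchelConj f (u - v)).toReal
      ≤ 2 * (fenchelConj f u).toReal + c ^ 2 / β := by
  have hx0D : f x0 ≠ ⊤ := intrinsicInterior_subset hx0
  set U := (fenchelConj f u).toReal with hU
  have helem : ∀ a ∈ intrinsicInterior ℝ {z : X | f z ≠ ⊤},
      ∀ b ∈ intrinsicInterior ℝ {z : X | f z ≠ ⊤},
      (⟪a, u + v⟫ - (f a).toReal) + (⟪b, u - v⟫ - (f b).toReal) ≤ 2 * U + c ^ 2 / β := by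
    intro a ha b hb
    obtain ⟨m, hmD, hmle⟩ := pairing_elem hN hβ hfbot hsc hc ha hb
    have hmU : ⟪m, u⟫ - (f m).toReal ≤ U := by
      have h := fy_elem (f := f) m u
      rw [(EReal.coe_toReal hmD (hfbot m)).symm, ← EReal.coe_sub,
        (EReal.coe_toReal (hfin u) (conj_ne_bot hfbot hx0D u)).symm,
        EReal.coe_le_coe_iff] at h
      exact h
    linarith
  have toReal_le : ∀ (y : X) (s : ℝ), fenchelConj f y ≤ (s : EReal) →
      (fenchelConj f y).toReal ≤ s := by
    intro y s h
    have := EReal.toReal_le_toReal h (conj_ne_bot hfbot hx0D y) (EReal.coe_ne_top _)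
    rwa [EReal.toReal_coe] at this
  have hA : (fenchelConj f (u + v)).toReal
      ≤ 2 * U + c ^ 2 / β - (⟪x0, u - v⟫ - (f x0).toReal) := by
    refine toReal_le _ _ (conj_le hfbot hconv hx0 (fun a ha => ?_))
    have := helem a ha x0 hx0
    linarith
  have hB : (fenchelConj f (u - v)).toReal
      ≤ 2 * U + c ^ 2 / β - (fenchelConj f (u + v)).toReal := by
    refine toReal_le _ _ (conj_le hfbot hconv hx0 (fun b hb => ?_))
    have h2 : ∀ a ∈ intrinsicInterior ℝ {z : X | f z ≠ ⊤},
        ⟪a, u + v⟫ - (f a).toReal ≤ 2 * U + c ^ 2 / β - (⟪b, u - v⟫ - (f b).toReal) := by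
      intro a ha
      have := helem a ha b hb
      linarith
    have h3 := toReal_le _ _ (conj_le hfbot hconv hx0 h2)
    linarith
  linarith

theorem sum_signs_le {n : ℕ} (G : X → ℝ) (hG0 : G 0 = 0) (v : Fin n → X) (K : ℝ)
    (hpair : ∀ (u : X) (i : Fin n), G (u + v i) + G (u - v i) ≤ 2 * G u + K) :
    ∑ s : Fin n → Bool, G (∑ i, (if s i then (1:ℝ) else -1) • v i)
      ≤ 2 ^ n * (n * K / 2) := by
  have hcard : (Finset.univ : Finset (Fin n → Bool)).card = 2 ^ n := by simp
  have main : ∀ k : ℕ, k ≤ n →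
      ∑ s : Fin n → Bool, G (∑ i ∈ Finset.univ.filter (fun i : Fin n => i.val < k),
        (if s i then (1:ℝ) else -1) • v i) ≤ 2 ^ n * (k * K / 2) := by
    intro k
    induction k with
    | zero =>
      intro _
      have he : Finset.univ.filter (fun i : Fin n => i.val < 0) = ∅ := by
        ext i; simp
      simp [he, hG0]
    | succ k ih =>
      intro hk1
      have hk : k < n := hk1
      have ihk := ih (le_of_lt hk)
      have hjA : (⟨k, hk⟩ : Fin n) ∉ Finset.univ.filter (fun i : Fin n => i.val < k) := by
        simp
      have hA : Finset.univ.filter (fun i : Fin n => i.val < k + 1)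
          = insert (⟨k, hk⟩ : Fin n) (Finset.univ.filter (fun i : Fin n => i.val < k)) := by
        ext i
        simp [Nat.lt_succ_iff_lt_or_eq, Fin.ext_iff, or_comm]
        exact le_iff_eq_or_lt
      set j : Fin n := ⟨k, hk⟩
      set u : (Fin n → Bool) → X := fun s =>
        ∑ i ∈ Finset.univ.filter (fun i : Fin n => i.val < k),
          (if s i then (1:ℝ) else -1) • v i with hu
      have hsum_eq : ∀ s : Fin n → Bool,
          (∑ i ∈ Finset.univ.filter (fun i : Fin n => i.val < k + 1),
            (if s i then (1:ℝ) else -1) • v i)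
          = u s + (if s j then (1:ℝ) else -1) • v j := by
        intro s
        rw [hA, Finset.sum_insert hjA, add_comm]
      have hinv : Function.Involutive (fun s : Fin n → Bool => Function.update s j (!s j)) := by
        intro s
        funext i
        by_cases hi : i = j
        · subst hi; simp
        · simp [Function.update_of_ne hi]
      have hue : ∀ s : Fin n → Bool, u (Function.update s j (!s j)) = u s := by
        intro s
        refine Finset.sum_congr rfl (fun i hi => ?_)
        have hij : i ≠ j := by
          intro h; rw [h] at hi; exact hjA hi
        rw [Function.update_of_ne hij]
      have hdouble : (2:ℝ) * ∑ s : Fin n → Bool, G (u s + (if s j then (1:ℝ) else -1) • v j)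
          = ∑ s : Fin n → Bool, (G (u s + (if s j then (1:ℝ) else -1) • v j)
            + G (u s - (if s j then (1:ℝ) else -1) • v j)) := by
        rw [Finset.sum_add_distrib, two_mul]
        congr 1
        have hre := Equiv.sum_comp (Function.Involutive.toPerm _ hinv)
          (fun s : Fin n → Bool => G (u s + (if s j then (1:ℝ) else -1) • v j))
        rw [← hre]
        refine Finset.sum_congr rfl (fun s _ => ?_)
        show G (u (Function.update s j (!s j))
            + (if Function.update s j (!s j) j then (1:ℝ) else -1) • v j) = _
        rw [hue]
        have h2 : (if Function.update s j (!s j) j then (1:ℝ) else -1)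
            = -(if s j then (1:ℝ) else -1) := by
          rw [show Function.update s j (!s j) j = !s j from Function.update_self _ _ _]
          cases s j <;> norm_num
        rw [h2, neg_smul, ← sub_eq_add_neg]
      have hbound : ∑ s : Fin n → Bool, (G (u s + (if s j then (1:ℝ) else -1) • v j)
            + G (u s - (if s j then (1:ℝ) else -1) • v j))
          ≤ ∑ s : Fin n → Bool, (2 * G (u s) + K) := by
        refine Finset.sum_le_sum (fun s _ => ?_)
        cases hsj : s j
        · have e1 : u s + (if false then (1:ℝ) else -1) • v j = u s - v j := by
            norm_num
            abel
          have e2 : u s - (if false then (1:ℝ) else -1) • v j = u s + v j := by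
            norm_num
          rw [e1, e2]
          have := hpair (u s) j
          linarith
        · have e1 : u s + (if true then (1:ℝ) else -1) • v j = u s + v j := by
            norm_num
          have e2 : u s - (if true then (1:ℝ) else -1) • v j = u s - v j := by
            norm_num
          rw [e1, e2]
          exact hpair (u s) j
      have hconstsum : ∑ s : Fin n → Bool, ((2:ℝ) * G (u s) + K)
          = 2 * (∑ s : Fin n → Bool, G (u s)) + 2 ^ n * K := by
        rw [Finset.sum_add_distrib, Finset.sum_const, hcard, ← Finset.mul_sum]
        push_cast
        ring
      calc ∑ s : Fin n → Bool, G (∑ i ∈ Finset.univ.filter (fun i : Fin n => i.val < k + 1),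
            (if s i then (1:ℝ) else -1) • v i)
          = ∑ s : Fin n → Bool, G (u s + (if s j then (1:ℝ) else -1) • v j) := by
            refine Finset.sum_congr rfl (fun s _ => ?_)
            rw [hsum_eq s]
        _ ≤ 2 ^ n * ((k + 1 : ℕ) * K / 2) := by
            have h3 : (2:ℝ) * ∑ s : Fin n → Bool,
                G (u s + (if s j then (1:ℝ) else -1) • v j)
                ≤ 2 * (∑ s : Fin n → Bool, G (u s)) + 2 ^ n * K := by
              rw [hdouble]
              rw [hconstsum] at hbound
              exact hbound
            push_cast
            push_cast at ihk
            linarith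
  have huniv : Finset.univ.filter (fun i : Fin n => i.val < n) = Finset.univ := by
    ext i; simp [i.isLt]
  have := main n le_rfl
  rw [huniv] at this
  exact this

theorem inner_le_dual_bound [FiniteDimensional ℝ X] {N : X → ℝ} (hN : IsNormOn N)
    {y : X} {Xb : ℝ} (hXb : dualNorm N y ≤ Xb) :
    ∀ d : X, ⟪d, y⟫ ≤ N d * Xb := by
  obtain ⟨C, hC0, hC⟩ := norm_comparison N hN
  intro d
  by_cases h0 : N d = 0
  · have hd0 : d = 0 := hN.2.1 d h0
    subst hd0
    rw [h0, inner_zero_left, zero_mul]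
  · have hNd : 0 < N d := lt_of_le_of_ne (hN.1 d) (Ne.symm h0)
    have hNz : N ((N d)⁻¹ • d) ≤ 1 := by
      rw [hN.2.2.1, abs_of_nonneg (inv_nonneg.mpr hNd.le), inv_mul_cancel₀ h0]
    have hbdd : BddAbove {r : ℝ | ∃ x : X, N x ≤ 1 ∧ r = ⟪x, y⟫} := by
      refine ⟨C * ‖y‖, ?_⟩
      rintro r ⟨z, hz, rfl⟩
      calc ⟪z, y⟫ ≤ ‖z‖ * ‖y‖ := real_inner_le_norm z y
        _ ≤ (C * N z) * ‖y‖ := by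
            exact mul_le_mul_of_nonneg_right (hC z) (norm_nonneg y)
        _ ≤ (C * 1) * ‖y‖ := by
            have := mul_le_mul_of_nonneg_left hz hC0
            exact mul_le_mul_of_nonneg_right this (norm_nonneg y)
        _ = C * ‖y‖ := by ring
    have hle : ⟪(N d)⁻¹ • d, y⟫ ≤ Xb :=
      le_trans (le_csSup hbdd ⟨(N d)⁻¹ • d, hNz, rfl⟩) hXb
    have heq : ⟪d, y⟫ = N d * ⟪(N d)⁻¹ • d, y⟫ := by
      rw [real_inner_smul_left]
      field_simp
    rw [heq]
    exact mul_le_mul_of_nonneg_left hle hNd.le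


/-- Rademacher complexity bound for linear classes (Theorem 2.6 of the paper): if `f` is
`β`-strongly convex w.r.t. `N`, closed convex with `f⋆(0) = 0`, the points `x i` satisfy
`dualNorm N (x i) ≤ Xb`, and `𝒲 = {w : f w ≤ fmax}`, then the Rademacher complexity
`E_ε [sup_{w ∈ 𝒲} (1/n) ∑ i ε_i ⟪w, x i⟫]` (expectation over uniform signs, written as a
normalized sum over all sign patterns `s : Fin n → Bool`) is at most
`Xb √(2 fmax/(β n))`. -/
theorem stmt3 [FiniteDimensional ℝ X]
    (N : X → ℝ) (hN : IsNormOn N) (β : ℝ) (hβ : 0 < β)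
    (f : X → EReal) (hfbot : ∀ x, f x ≠ ⊥) (hproper : ∃ x, f x ≠ ⊤)
    (hclosed : LowerSemicontinuous f) (hconv : ERealConvexOn f)
    (hsc : EStrongConvexOn N β f) (hstar0 : fenchelConj f 0 = 0)
    (Xb fmax : ℝ) (hXb : 0 < Xb) (hfmax : 0 < fmax)
    (n : ℕ) (hn : 0 < n) (x : Fin n → X) (hx : ∀ i, dualNorm N (x i) ≤ Xb) :
    (1 / 2 ^ n : ℝ) * ∑ s : Fin n → Bool,
        sSup {r : ℝ | ∃ w : X, f w ≤ (fmax : EReal) ∧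
          r = (1 / n : ℝ) * ∑ i, (if s i then (1 : ℝ) else -1) * ⟪w, x i⟫} ≤
      Xb * Real.sqrt (2 * fmax / (β * n)) := by
  classical
  obtain ⟨x0', hx0'⟩ := hproper
  have Dconv : Convex ℝ {z : X | f z ≠ ⊤} := domain_convex hfbot hconv
  obtain ⟨x0, hx0⟩ := Set.Nonempty.intrinsicInterior Dconv ⟨x0', hx0'⟩
  obtain ⟨C, hC0, hC⟩ := norm_comparison N hN
  have hfin : ∀ y : X, fenchelConj f y ≠ ⊤ := by
    intro y
    refine conj_ne_top hN hβ hfbot hconv hsc hstar0 hx0 (c := C * ‖y‖) (fun d => ?_)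
    calc ⟪d, y⟫ ≤ ‖d‖ * ‖y‖ := real_inner_le_norm d y
      _ ≤ (C * N d) * ‖y‖ := mul_le_mul_of_nonneg_right (hC d) (norm_nonneg y)
      _ = N d * (C * ‖y‖) := by ring
  have hnbot : ∀ y : X, fenchelConj f y ≠ ⊥ :=
    fun y => conj_ne_bot hfbot (intrinsicInterior_subset hx0) y
  set G : X → ℝ := fun y => (fenchelConj f y).toReal with hG
  have hGcoe : ∀ y : X, fenchelConj f y = ((G y : ℝ) : EReal) :=
    fun y => (EReal.coe_toReal (hfin y) (hnbot y)).symm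
  have hG0 : G 0 = 0 := by rw [hG]; simp [hstar0]
  have hnR : (0:ℝ) < (n : ℝ) := by exact_mod_cast hn
  have hprod : (0:ℝ) < 2 * β * n * fmax := by positivity
  set S := Real.sqrt (2 * β * n * fmax) with hS
  have hS0 : 0 < S := Real.sqrt_pos.mpr hprod
  have hS2 : S ^ 2 = 2 * β * n * fmax := Real.sq_sqrt hprod.le
  set lam := S / Xb with hlam
  have hlam0 : 0 < lam := div_pos hS0 hXb
  set v : Fin n → X := fun i => (lam / n) • x i with hv
  set c := lam * Xb / n with hc
  set K := c ^ 2 / β with hK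
  have hxi : ∀ (i : Fin n) (d : X), ⟪d, x i⟫ ≤ N d * Xb :=
    fun i => inner_le_dual_bound hN (hx i)
  have hpair : ∀ (u : X) (i : Fin n), G (u + v i) + G (u - v i) ≤ 2 * G u + K := by
    intro u i
    refine pairing_real hN hβ hfbot hconv hsc hx0 hfin (c := c) (fun d => ?_)
    have h0 : v i = (lam / n) • x i := rfl
    rw [h0, real_inner_smul_right]
    calc (lam / n) * ⟪d, x i⟫ ≤ (lam / n) * (N d * Xb) :=
          mul_le_mul_of_nonneg_left (hxi i d) (by positivity)
      _ = N d * c := by rw [hc]; ring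
  have hsum := sum_signs_le G hG0 v K hpair
  -- nonemptiness of the constraint set
  have hW : ∃ w0 : X, f w0 ≤ (fmax : EReal) := by
    have h1 : ((-fmax : ℝ) : EReal) < fenchelConj f 0 := by
      rw [hstar0]
      exact_mod_cast (by linarith : -fmax < (0:ℝ))
    rw [fenchelConj, lt_iSup_iff] at h1
    obtain ⟨w0, hw0⟩ := h1
    by_cases htop : f w0 = ⊤
    · rw [htop, EReal.sub_top] at hw0
      exact absurd hw0 (not_lt_bot)
    · refine ⟨w0, ?_⟩
      rw [(EReal.coe_toReal htop (hfbot w0)).symm, ← EReal.coe_sub, EReal.coe_lt_coe_iff,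
        inner_zero_right] at hw0
      rw [(EReal.coe_toReal htop (hfbot w0)).symm, EReal.coe_le_coe_iff]
      linarith
  obtain ⟨w0, hw0⟩ := hW
  have hpers : ∀ s : Fin n → Bool,
      sSup {r : ℝ | ∃ w : X, f w ≤ (fmax : EReal) ∧
        r = (1 / n : ℝ) * ∑ i, (if s i then (1 : ℝ) else -1) * ⟪w, x i⟫}
      ≤ (fmax + G (∑ i, (if s i then (1:ℝ) else -1) • v i)) / lam := by
    intro s
    refine csSup_le ⟨_, w0, hw0, rfl⟩ ?_
    rintro r ⟨w, hwf, rfl⟩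
    have hwtop : f w ≠ ⊤ := ne_top_of_le_ne_top (EReal.coe_ne_top _) hwf
    have hFw : (f w).toReal ≤ fmax := by
      have := EReal.toReal_le_toReal hwf (hfbot w) (EReal.coe_ne_top _)
      rwa [EReal.toReal_coe] at this
    have h1 : ⟪w, ∑ i, (if s i then (1:ℝ) else -1) • v i⟫
        = lam * ((1 / n : ℝ) * ∑ i, (if s i then (1 : ℝ) else -1) * ⟪w, x i⟫) := by
      rw [inner_sum, Finset.mul_sum, Finset.mul_sum]
      refine Finset.sum_congr rfl (fun i _ => ?_)
      have h0 : v i = (lam / n) • x i := rfl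
      rw [real_inner_smul_right, h0, real_inner_smul_right]
      rw [div_eq_mul_inv]
      ring
    have h2 : ⟪w, ∑ i, (if s i then (1:ℝ) else -1) • v i⟫ - (f w).toReal
        ≤ G (∑ i, (if s i then (1:ℝ) else -1) • v i) := by
      have h := fy_elem (f := f) w (∑ i, (if s i then (1:ℝ) else -1) • v i)
      rw [(EReal.coe_toReal hwtop (hfbot w)).symm, ← EReal.coe_sub, hGcoe,
        EReal.coe_le_coe_iff] at h
      exact h
    rw [le_div_iff₀ hlam0]
    rw [h1] at h2
    nlinarith [h2, hFw, hlam0]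
  have hcardR : ((Finset.univ : Finset (Fin n → Bool)).card : ℝ) = 2 ^ n := by
    simp
  calc (1 / 2 ^ n : ℝ) * ∑ s : Fin n → Bool,
        sSup {r : ℝ | ∃ w : X, f w ≤ (fmax : EReal) ∧
          r = (1 / n : ℝ) * ∑ i, (if s i then (1 : ℝ) else -1) * ⟪w, x i⟫}
      ≤ (1 / 2 ^ n : ℝ) * ∑ s : Fin n → Bool,
          ((fmax + G (∑ i, (if s i then (1:ℝ) else -1) • v i)) / lam) := by
        refine mul_le_mul_of_nonneg_left (Finset.sum_le_sum (fun s _ => hpers s))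
          (by positivity)
    _ ≤ Xb * Real.sqrt (2 * fmax / (β * n)) := by
        have hsplit : ∑ s : Fin n → Bool,
            ((fmax + G (∑ i, (if s i then (1:ℝ) else -1) • v i)) / lam)
            = ((2:ℝ) ^ n * fmax
              + ∑ s : Fin n → Bool, G (∑ i, (if s i then (1:ℝ) else -1) • v i)) / lam := by
          rw [← Finset.sum_div, Finset.sum_add_distrib, Finset.sum_const, nsmul_eq_mul,
            hcardR]
        rw [hsplit]
        have htarget : Real.sqrt (2 * fmax / (β * n)) = S / (β * n) := by
          have h7 : 2 * fmax / (β * n) = (S / (β * n)) ^ 2 := by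
            rw [div_pow, hS2]
            field_simp
          rw [h7, Real.sqrt_sq (by positivity)]
        rw [htarget]
        have hP : (0:ℝ) < 2 ^ n := by positivity
        have hstep : (1 / 2 ^ n : ℝ) * (((2:ℝ) ^ n * fmax
              + ∑ s : Fin n → Bool, G (∑ i, (if s i then (1:ℝ) else -1) • v i)) / lam)
            ≤ (fmax + (n : ℝ) * K / 2) / lam := by
          have h8 : ∑ s : Fin n → Bool, G (∑ i, (if s i then (1:ℝ) else -1) • v i)
              ≤ 2 ^ n * ((n : ℝ) * K / 2) := hsum
          have h9 : (1 / 2 ^ n : ℝ) * ((2:ℝ) ^ n * fmax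
              + ∑ s : Fin n → Bool, G (∑ i, (if s i then (1:ℝ) else -1) • v i))
              ≤ fmax + (n : ℝ) * K / 2 := by
            have h10 : (1 / 2 ^ n : ℝ) * ((2:ℝ) ^ n * fmax
                + ∑ s : Fin n → Bool, G (∑ i, (if s i then (1:ℝ) else -1) • v i))
                = fmax + (∑ s : Fin n → Bool,
                    G (∑ i, (if s i then (1:ℝ) else -1) • v i)) / 2 ^ n := by
              field_simp
            rw [h10]
            have h11 : (∑ s : Fin n → Bool,
                G (∑ i, (if s i then (1:ℝ) else -1) • v i)) / 2 ^ n ≤ (n : ℝ) * K / 2 := by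
              rw [div_le_iff₀ (by positivity : (0:ℝ) < 2 ^ n)]
              linarith
            linarith
          rw [← mul_div_assoc]
          gcongr
        refine le_trans hstep ?_
        have hfm : fmax = S ^ 2 / (2 * β * n) := by
          rw [hS2]
          field_simp
        have heq : (fmax + (n : ℝ) * K / 2) / lam = Xb * (S / (β * n)) := by
          rw [hK, hc, hlam, hfm]
          field_simp
          ring
        rw [heq]
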